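/- Abstract boundary conditions: for the self-adjoint operator A_B of the Kreĭn formula and any z ∈ ρ(A_B) ∩ ρ(A), one has dom(A_B) = {u ∈ H : u − G_z ρ_B u ∈ dom(A)} and (−A_B + z)u = (−A + z)(u − G_z ρ_B u). Moreover every u ∈ dom(A_B) satisfies (π₁*B₁⊕B₂) τ u = (1⊕B₀) ρ_B u. -/

import Mathlib

open ComplexConjugate
noncomputable section

/-- `Rz` is the resolvent `(-A + z)⁻¹` of the (unbounded) operator `A` at `z`. -/
def IsResolventAt {H : Type*} [NormedAddCommGroup H] [InnerProductSpace ℂ H] [CompleteSpace H]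
    (A : H →ₗ.[ℂ] H) (z : ℂ) (Rz : H →L[ℂ] H) : Prop :=
  (∀ u : H, ∃ hu : Rz u ∈ A.domain, z • Rz u - A ⟨Rz u, hu⟩ = u) ∧
    ∀ x : A.domain, Rz (z • (x : H) - A x) = x

/-- The block-diagonal operator `P ⊕ Q` between Hilbertian direct sums. -/
def blockDiag {h1 h2 h1' h2' : Type*}
    [NormedAddCommGroup h1] [InnerProductSpace ℂ h1]
    [NormedAddCommGroup h2] [InnerProductSpace ℂ h2]
    [NormedAddCommGroup h1'] [InnerProductSpace ℂ h1']
    [NormedAddCommGroup h2'] [InnerProductSpace ℂ h2']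
    (P : h1 →L[ℂ] h1') (Q : h2 →L[ℂ] h2') :
    WithLp 2 (h1 × h2) →L[ℂ] WithLp 2 (h1' × h2') :=
  ((WithLp.prodContinuousLinearEquiv 2 ℂ h1' h2').symm.toContinuousLinearMap.comp
      (P.prodMap Q)).comp
    (WithLp.prodContinuousLinearEquiv 2 ℂ h1 h2).toContinuousLinearMap

/-- The pair `(φ₁, φ₂)` as an element of the Hilbertian direct sum. -/
def pairL2 {h1 h2 : Type*}
    [NormedAddCommGroup h1] [InnerProductSpace ℂ h1]
    [NormedAddCommGroup h2] [InnerProductSpace ℂ h2] (φ₁ : h1) (φ₂ : h2) :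
    WithLp 2 (h1 × h2) :=
  (WithLp.prodContinuousLinearEquiv 2 ℂ h1 h2).symm (φ₁, φ₂)

section Aux
open ComplexConjugate
variable {h1 h2 : Type*}
    [NormedAddCommGroup h1] [InnerProductSpace ℂ h1]
    [NormedAddCommGroup h2] [InnerProductSpace ℂ h2]

lemma inner_pairL2 (a a' : h1) (b b' : h2) :
    (inner ℂ (pairL2 a b) (pairL2 a' b') : ℂ) = inner ℂ a a' + inner ℂ b b' := by
  simp [pairL2, WithLp.prod_inner_apply, WithLp.prodContinuousLinearEquiv_symm_apply]

end Aux

set_option maxHeartbeats 1000000 in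
/-- **abstract boundary conditions.** For the self-adjoint operator `A_B` of the
Kreĭn formula and any `z ∈ ρ(A_B) ∩ ρ(A)`:
`dom A_B = {u : u − G_z ρ_B u ∈ dom A}`, `(−A_B + z) u = (−A + z)(u − G_z ρ_B u)`, and every
`u ∈ dom A_B` satisfies `(π₁* B₁ ⊕ B₂) τ u = (1 ⊕ B₀) ρ_B u` (with `τ` the extended trace). -/
theorem statement_8
    {H h1 h2 h22 : Type*}
    [NormedAddCommGroup H] [InnerProductSpace ℂ H] [CompleteSpace H]
    [NormedAddCommGroup h1] [InnerProductSpace ℂ h1] [CompleteSpace h1]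
    [NormedAddCommGroup h2] [InnerProductSpace ℂ h2] [CompleteSpace h2]
    [NormedAddCommGroup h22] [InnerProductSpace ℂ h22] [CompleteSpace h22]
    (A : H →ₗ.[ℂ] H) (hA : IsSelfAdjoint A)
    (R : ℂ → H →L[ℂ] H) (ρA : Set ℂ)
    (hρA : ρA = {z : ℂ | ∃ Q : H →L[ℂ] H, IsResolventAt A z Q})
    (hρAres : ∀ z ∈ ρA, IsResolventAt A z (R z))
    (hρAconj : ∀ z ∈ ρA, conj z ∈ ρA)
    (τ₁ : A.domain →ₗ[ℂ] h1) (τ₂ : A.domain →ₗ[ℂ] h2)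
    (hτbdd : ∃ C : ℝ, ∀ x : A.domain, ‖τ₁ x‖ + ‖τ₂ x‖ ≤ C * (‖(x : H)‖ + ‖A x‖))
    (hker₂ : Dense {u : H | ∃ hu : u ∈ A.domain, τ₂ ⟨u, hu⟩ = 0})
    (hran₂ : DenseRange τ₂)
    (T : ℂ → H →L[ℂ] WithLp 2 (h1 × h2))
    (hT : ∀ z ∈ ρA, ∀ (u : H) (hu : R z u ∈ A.domain),
      T z u = pairL2 (τ₁ ⟨R z u, hu⟩) (τ₂ ⟨R z u, hu⟩))
    (G : ℂ → WithLp 2 (h1 × h2) →L[ℂ] H)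
    (hG : ∀ z ∈ ρA, G z = (T (conj z)).adjoint)
    (N : ℂ → WithLp 2 (h1 × h2) →L[ℂ] WithLp 2 (h1 × h2))
    (hNext : ∀ z ∈ ρA, ∀ (φ : WithLp 2 (h1 × h2)) (hφ : G z φ ∈ A.domain),
      N z φ = pairL2 (τ₁ ⟨G z φ, hφ⟩) (τ₂ ⟨G z φ, hφ⟩))
    (hNadj : ∀ z ∈ ρA, (N z).adjoint = N (conj z))
    (hNdiff : ∀ z ∈ ρA, ∀ w ∈ ρA,
      N w - N z = (z - w) • (((G (conj w)).adjoint).comp (G z)))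
    (B₀ : h2 →L[ℂ] h22) (B₁ : h1 →L[ℂ] h1) (B₂ : h2 →L[ℂ] h22)
    (hB₁ : IsSelfAdjoint B₁) (hB₀₂ : B₀.comp B₂.adjoint = B₂.comp B₀.adjoint)
    (Minv : ℂ → WithLp 2 (h1 × h22) →L[ℂ] WithLp 2 (h1 × h2))
    (ZB : Set ℂ)
    (hZB : ZB = {z ∈ ρA | ∀ w ∈ ({z, conj z} : Set ℂ),
      (Minv w).comp (blockDiag (1 : h1 →L[ℂ] h1) B₀ - (blockDiag B₁ B₂).comp (N w)) = 1 ∧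
      (blockDiag (1 : h1 →L[ℂ] h1) B₀ - (blockDiag B₁ B₂).comp (N w)).comp (Minv w) = 1})
    (hZBne : ZB.Nonempty)
    (AB : H →ₗ.[ℂ] H) (hAB : IsSelfAdjoint AB)
    (hABres : ∀ z ∈ ZB, IsResolventAt AB z
      (R z + ((G z).comp ((Minv z).comp (blockDiag B₁ B₂))).comp ((G (conj z)).adjoint)))
    (P1 : h1 →L[ℂ] h1) (hP1sa : IsSelfAdjoint P1) (hP1idem : P1.comp P1 = P1)
    (hP1mem : ∀ y : h1, P1 y ∈ closure (Set.range fun x : A.domain => τ₁ x))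
    (hP1fix : ∀ y ∈ closure (Set.range fun x : A.domain => τ₁ x), P1 y = y)
    (ρB : AB.domain →ₗ[ℂ] WithLp 2 (h1 × h2))
    (hρB : ∀ z ∈ ZB, ∀ (u : H)
      (hu : (R z + ((G z).comp ((Minv z).comp (blockDiag B₁ B₂))).comp
        ((G (conj z)).adjoint)) u ∈ AB.domain),
      ρB ⟨(R z + ((G z).comp ((Minv z).comp (blockDiag B₁ B₂))).comp
        ((G (conj z)).adjoint)) u, hu⟩
        = blockDiag P1 (1 : h2 →L[ℂ] h2)
            ((Minv z) ((blockDiag B₁ B₂) ((G (conj z)).adjoint u))))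
    (τe : AB.domain →ₗ[ℂ] WithLp 2 (h1 × h2))
    (hτe : ∀ z ∈ ZB, ∀ (u : H)
      (hu : (R z + ((G z).comp ((Minv z).comp (blockDiag B₁ B₂))).comp
        ((G (conj z)).adjoint)) u ∈ AB.domain),
      τe ⟨(R z + ((G z).comp ((Minv z).comp (blockDiag B₁ B₂))).comp
        ((G (conj z)).adjoint)) u, hu⟩
        = T z u + N z ((Minv z) ((blockDiag B₁ B₂) ((G (conj z)).adjoint u))))
    :
    ∀ z ∈ ZB,
      ((AB.domain : Set H)
          = {u : H | ∃ hu : u ∈ AB.domain, (u - G z (ρB ⟨u, hu⟩)) ∈ A.domain}) ∧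
      (∀ v : AB.domain, ∃ h : ((v : H) - G z (ρB v)) ∈ A.domain,
        z • (v : H) - AB v
          = z • ((v : H) - G z (ρB v)) - A ⟨(v : H) - G z (ρB v), h⟩) ∧
      (∀ v : AB.domain,
        blockDiag (P1.comp B₁) B₂ (τe v)
          = blockDiag (1 : h1 →L[ℂ] h1) B₀ (ρB v)) := by

  intro z hz
  have hz' := hz
  rw [hZB] at hz'
  have hz1 : z ∈ ρA := hz'.1
  have hzc : conj z ∈ ρA := hρAconj z hz1
  have hGadj : (G (conj z)).adjoint = T z := by
    rw [hG (conj z) hzc]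
    simp [Complex.conj_conj, ContinuousLinearMap.adjoint_adjoint]
  have hadj : P1.adjoint = P1 := ContinuousLinearMap.isSelfAdjoint_iff'.mp hP1sa
  have hGP1 : ∀ φ : WithLp 2 (h1 × h2),
      G z (blockDiag P1 (1 : h2 →L[ℂ] h2) φ) = G z φ := by
    intro φ
    rw [hG z hz1]
    have key : ∀ a, a ∈ closure (Set.range fun x : A.domain => τ₁ x) →
        ∀ b : h2, (inner ℂ (pairL2 (P1 φ.fst - φ.fst) (φ.snd - φ.snd)) (pairL2 a b) : ℂ) = 0 := by
      intro a hamem b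
      rw [inner_pairL2, sub_self, inner_zero_left, add_zero, inner_sub_left,
        ← hadj, ContinuousLinearMap.adjoint_inner_left, hP1fix a hamem, sub_self]
    have hker : (T (conj z)).adjoint (blockDiag P1 (1 : h2 →L[ℂ] h2) φ - φ) = 0 := by
      rw [← inner_self_eq_zero (𝕜 := ℂ), ContinuousLinearMap.adjoint_inner_left]
      obtain ⟨hw, -⟩ := (hρAres _ hzc).1
        ((T (conj z)).adjoint (blockDiag P1 (1 : h2 →L[ℂ] h2) φ - φ))
      rw [hT (conj z) hzc _ hw]
      exact key _ (subset_closure ⟨_, rfl⟩) _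
    rw [map_sub] at hker
    exact sub_eq_zero.mp hker
  have hres := hABres z hz
  have main : ∀ v : AB.domain,
      ρB v = blockDiag P1 (1 : h2 →L[ℂ] h2)
        (Minv z (blockDiag B₁ B₂ (T z (z • (v : H) - AB v)))) ∧
      τe v = T z (z • (v : H) - AB v)
        + N z (Minv z (blockDiag B₁ B₂ (T z (z • (v : H) - AB v)))) ∧
      (v : H) - G z (ρB v) = R z (z • (v : H) - AB v) := by
    intro v
    have hv : (R z + ((G z).comp ((Minv z).comp (blockDiag B₁ B₂))).comp
        ((G (conj z)).adjoint)) (z • (v : H) - AB v) = v := hres.2 v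
    obtain ⟨hu, -⟩ := hres.1 (z • (v : H) - AB v)
    have hveq : (⟨(R z + ((G z).comp ((Minv z).comp (blockDiag B₁ B₂))).comp
        ((G (conj z)).adjoint)) (z • (v : H) - AB v), hu⟩ : AB.domain) = v := Subtype.ext hv
    have hr := hρB z hz _ hu
    have ht := hτe z hz _ hu
    rw [hveq, hGadj] at hr ht
    refine ⟨hr, ht, ?_⟩
    have hv2 := hv
    rw [ContinuousLinearMap.add_apply, ContinuousLinearMap.comp_apply,
      ContinuousLinearMap.comp_apply, ContinuousLinearMap.comp_apply, hGadj] at hv2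
    rw [hr, hGP1]
    exact sub_eq_of_eq_add hv2.symm
  refine ⟨?_, ?_, ?_⟩
  · ext w
    simp only [Set.mem_setOf_eq, SetLike.mem_coe]
    constructor
    · intro hw
      refine ⟨hw, ?_⟩
      have hkey := (main ⟨w, hw⟩).2.2
      obtain ⟨hm, -⟩ := (hρAres z hz1).1 (z • ((⟨w, hw⟩ : AB.domain) : H) - AB ⟨w, hw⟩)
      rw [show ((⟨w, hw⟩ : AB.domain) : H) = w from rfl] at hkey
      rw [hkey]
      exact hm
    · rintro ⟨hw, -⟩
      exact hw
  · intro v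
    have hkey := (main v).2.2
    obtain ⟨hm, he⟩ := (hρAres z hz1).1 (z • (v : H) - AB v)
    have h : (v : H) - G z (ρB v) ∈ A.domain := by rw [hkey]; exact hm
    refine ⟨h, ?_⟩
    have hsub : (⟨(v : H) - G z (ρB v), h⟩ : A.domain) = ⟨_, hm⟩ := Subtype.ext hkey
    rw [hsub, hkey, he]
  · intro v
    obtain ⟨hr, ht, -⟩ := main v
    set u := z • (v : H) - AB v with hu_def
    set φ := Minv z (blockDiag B₁ B₂ (T z u)) with hφ_def
    have happ : blockDiag (1 : h1 →L[ℂ] h1) B₀ φ - blockDiag B₁ B₂ (N z φ)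
        = blockDiag B₁ B₂ (T z u) := by
      have h := DFunLike.congr_fun (hz'.2 z (Set.mem_insert _ _)).2 (blockDiag B₁ B₂ (T z u))
      rw [ContinuousLinearMap.comp_apply, ContinuousLinearMap.sub_apply,
        ContinuousLinearMap.comp_apply, ContinuousLinearMap.one_apply] at h
      exact h
    have h1c : φ.fst - B₁ ((N z φ).fst) = B₁ ((T z u).fst) := congrArg WithLp.fst happ
    have h2c : B₀ φ.snd - B₂ ((N z φ).snd) = B₂ ((T z u).snd) := congrArg WithLp.snd happ
    have e1 : P1 (B₁ ((T z u).fst + (N z φ).fst)) = P1 φ.fst := by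
      have hφ1 : φ.fst = B₁ ((T z u).fst) + B₁ ((N z φ).fst) := by
        rw [← eq_add_of_sub_eq h1c]
      rw [map_add, ← hφ1]
    have e2 : B₂ ((T z u).snd + (N z φ).snd) = B₀ φ.snd := by
      have hφ2 : B₀ φ.snd = B₂ ((T z u).snd) + B₂ ((N z φ).snd) := by
        rw [← eq_add_of_sub_eq h2c]
      rw [map_add, ← hφ2]
    rw [hr, ht]
    exact congrArg (WithLp.toLp 2) (Prod.ext e1 e2)
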